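/- Let N ≥ 1 and let P1, P2, P4 be N×N complex matrices such that P1 is unitary (P1†·P1 = I_N), P2 ≠ P4, and (P4−P2)† · (P4−P2) = (‖P4−P2‖_F² / N) · I_N. Then the block matrix [[I_N, P1·P2],[I_N, P1·P4]] is invertible and [[I_N, P1·P2],[I_N, P1·P4]]^{−1} · G(P1,P2,P1,P4) = [[I_N, P1, 0_N],[0_N, 0_N, I_N]] · Ā, where the right-hand left factor is the indicated 2N×3N block matrix. -/

import Mathlib

open Matrix

noncomputable section

/-- Squared Frobenius norm of a complex matrix. -/
def frobSq {m n : ℕ} (X : Matrix (Fin m) (Fin n) ℂ) : ℝ :=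
  ∑ i, ∑ j, Complex.normSq (X i j)

/-- The 3N × (3N-1) bidiagonal matrix `Ā` of the paper (0-indexed):
`-1` on the diagonal, `1` on the subdiagonal, zeros elsewhere. -/
def Abar (N : ℕ) : Matrix (Fin (3 * N)) (Fin (3 * N - 1)) ℂ :=
  Matrix.of fun i j =>
    if i.val = j.val then -1 else if i.val = j.val + 1 then 1 else 0

/-- 2N × 3N block matrix `[[A, B, C], [D, E, F]]` built out of N × N blocks. -/
def blk23 {N : ℕ} (A B C D E F : Matrix (Fin N) (Fin N) ℂ) :
    Matrix (Fin (2 * N)) (Fin (3 * N)) ℂ :=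
  Matrix.of fun i j =>
    if hi : i.val < N then
      if hj : j.val < N then A ⟨i.val, hi⟩ ⟨j.val, hj⟩
      else if hj2 : j.val < 2 * N then B ⟨i.val, hi⟩ ⟨j.val - N, by omega⟩
      else C ⟨i.val, hi⟩ ⟨j.val - 2 * N, by have := j.isLt; omega⟩
    else
      if hj : j.val < N then D ⟨i.val - N, by have := i.isLt; omega⟩ ⟨j.val, hj⟩
      else if hj2 : j.val < 2 * N then
        E ⟨i.val - N, by have := i.isLt; omega⟩ ⟨j.val - N, by omega⟩
      else F ⟨i.val - N, by have := i.isLt; omega⟩ ⟨j.val - 2 * N, by have := j.isLt; omega⟩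

/-- 2N × 2N block matrix `[[A, B], [C, D]]` built out of N × N blocks. -/
def blk22 {N : ℕ} (A B C D : Matrix (Fin N) (Fin N) ℂ) :
    Matrix (Fin (2 * N)) (Fin (2 * N)) ℂ :=
  Matrix.of fun i j =>
    if hi : i.val < N then
      if hj : j.val < N then A ⟨i.val, hi⟩ ⟨j.val, hj⟩
      else B ⟨i.val, hi⟩ ⟨j.val - N, by have := j.isLt; omega⟩
    else
      if hj : j.val < N then C ⟨i.val - N, by have := i.isLt; omega⟩ ⟨j.val, hj⟩
      else D ⟨i.val - N, by have := i.isLt; omega⟩ ⟨j.val - N, by have := j.isLt; omega⟩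

/-- The 2N × (3N-1) matrix `G(P1, P2, P3, P4) = [[I, P1, P1·P2], [I, P3, P3·P4]] · Ā`. -/
def Gmat {N : ℕ} (P1 P2 P3 P4 : Matrix (Fin N) (Fin N) ℂ) :
    Matrix (Fin (2 * N)) (Fin (3 * N - 1)) ℂ :=
  blk23 1 P1 (P1 * P2) 1 P3 (P3 * P4) * Abar N

/-- The 1 × N all-ones row vector `w`. -/
def wrow (N : ℕ) : Matrix (Fin 1) (Fin N) ℂ :=
  Matrix.of fun _ _ => 1


def e2 (N : ℕ) : Fin N ⊕ Fin N ≃ Fin (2 * N) :=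
  finSumFinEquiv.trans (finCongr (by ring))

def e3 (N : ℕ) : Fin N ⊕ (Fin N ⊕ Fin N) ≃ Fin (3 * N) :=
  (Equiv.sumCongr (Equiv.refl (Fin N)) (e2 N)).trans
    (finSumFinEquiv.trans (finCongr (by ring)))

lemma e2_inl (N : ℕ) (a : Fin N) : ((e2 N) (Sum.inl a)).val = a.val := by
  simp [e2]
lemma e2_inr (N : ℕ) (a : Fin N) : ((e2 N) (Sum.inr a)).val = N + a.val := by
  simp [e2]; omega
lemma e3_inl (N : ℕ) (a : Fin N) : ((e3 N) (Sum.inl a)).val = a.val := by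
  simp [e3]
lemma e3_inrl (N : ℕ) (a : Fin N) : ((e3 N) (Sum.inr (Sum.inl a))).val = N + a.val := by
  simp [e3, e2]
lemma e3_inrr (N : ℕ) (a : Fin N) : ((e3 N) (Sum.inr (Sum.inr a))).val = N + (N + a.val) := by
  simp [e3, e2]; omega

lemma blk22_eq {N : ℕ} (A B C D : Matrix (Fin N) (Fin N) ℂ) :
    blk22 A B C D = (fromBlocks A B C D).submatrix (e2 N).symm (e2 N).symm := by
  ext i j
  obtain ⟨x, rfl⟩ := (e2 N).surjective i
  obtain ⟨y, rfl⟩ := (e2 N).surjective j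
  simp only [submatrix_apply, Equiv.symm_apply_apply]
  rcases x with a | a <;> rcases y with b | b <;>
    simp only [blk22, of_apply, e2_inl, e2_inr, fromBlocks_apply₁₁, fromBlocks_apply₁₂,
      fromBlocks_apply₂₁, fromBlocks_apply₂₂] <;>
    split_ifs <;>
    first
      | rfl
      | omega
      | (congr <;> omega)

lemma blk23_eq {N : ℕ} (A B C D E F : Matrix (Fin N) (Fin N) ℂ) :
    blk23 A B C D E F =
      (fromBlocks A (fromCols B C) D (fromCols E F)).submatrix
        (e2 N).symm (e3 N).symm := by
  ext i j
  obtain ⟨x, rfl⟩ := (e2 N).surjective i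
  obtain ⟨y, rfl⟩ := (e3 N).surjective j
  simp only [submatrix_apply, Equiv.symm_apply_apply]
  rcases x with a | a <;> rcases y with b | b | b <;>
    simp only [blk23, of_apply, e2_inl, e2_inr, e3_inl, e3_inrl, e3_inrr,
      fromBlocks_apply₁₁, fromBlocks_apply₁₂, fromBlocks_apply₂₁, fromBlocks_apply₂₂,
      fromCols_apply_inl, fromCols_apply_inr] <;>
    split_ifs <;>
    first
      | rfl
      | omega
      | (congr <;> omega)

lemma fromColumns_add' {N : ℕ} (A B C D : Matrix (Fin N) (Fin N) ℂ) :
    fromCols A B + fromCols C D = fromCols (A + C) (B + D) := by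
  ext i (j | j) <;> simp

theorem stmt4 (N : ℕ) (hN : 1 ≤ N) (P1 P2 P4 : Matrix (Fin N) (Fin N) ℂ)
    (hP1 : P1ᴴ * P1 = 1) (hne : P2 ≠ P4)
    (hcond : (P4 - P2)ᴴ * (P4 - P2) = ((frobSq (P4 - P2) / (N : ℝ) : ℝ) : ℂ) • 1) :
    IsUnit (blk22 1 (P1 * P2) 1 (P1 * P4)) ∧
      (blk22 1 (P1 * P2) 1 (P1 * P4))⁻¹ * Gmat P1 P2 P1 P4 =
        blk23 1 P1 0 0 0 1 * Abar N := by
  classical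
  set B := P1 * P2 with hB
  set Dm := P4 - P2 with hDm
  set S := P1 * Dm with hS
  have hP1' : P1 * P1ᴴ = 1 := (mul_eq_one_comm).mp hP1
  have hP1u : IsUnit P1 := ⟨⟨P1, P1ᴴ, hP1', hP1⟩, rfl⟩
  have hDne : Dm ≠ 0 := sub_ne_zero.mpr (Ne.symm hne)
  have hfpos : 0 < frobSq Dm := by
    obtain ⟨i, j, hij⟩ : ∃ i j, Dm i j ≠ 0 := by
      by_contra h
      push_neg at h
      exact hDne (by ext i j; simpa using h i j)
    have h1 : 0 < Complex.normSq (Dm i j) := by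
      simpa [Complex.normSq_pos] using hij
    have h2 : 0 < ∑ j', Complex.normSq (Dm i j') :=
      Finset.sum_pos' (fun _ _ => Complex.normSq_nonneg _) ⟨j, Finset.mem_univ _, h1⟩
    exact Finset.sum_pos' (fun _ _ => Finset.sum_nonneg fun _ _ => Complex.normSq_nonneg _)
      ⟨i, Finset.mem_univ _, h2⟩
  set c : ℂ := ((frobSq Dm / (N : ℝ) : ℝ) : ℂ) with hc
  have hcne : c ≠ 0 := by
    have h0 : (frobSq Dm / (N : ℝ)) ≠ 0 := by
      have hN0 : (0:ℝ) < (N : ℝ) := by exact_mod_cast hN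
      positivity
    exact Complex.ofReal_ne_zero.mpr h0
  have hDinv : (c⁻¹ • Dmᴴ) * Dm = 1 := by
    rw [Matrix.smul_mul, hcond, smul_smul, inv_mul_cancel₀ hcne, one_smul]
  have hDinv' : Dm * (c⁻¹ • Dmᴴ) = 1 := (mul_eq_one_comm).mp hDinv
  have hDu : IsUnit Dm := ⟨⟨Dm, c⁻¹ • Dmᴴ, hDinv', hDinv⟩, rfl⟩
  have hSu : IsUnit S := hP1u.mul hDu
  have hSdet : IsUnit S.det := by rwa [← Matrix.isUnit_iff_isUnit_det]
  have hSS : S * S⁻¹ = 1 := Matrix.mul_nonsing_inv S hSdet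
  have hP4 : P1 * P4 = B + S := by
    rw [hB, hS, hDm, Matrix.mul_sub]; abel
  set M := blk22 1 B 1 (P1 * P4) with hM
  set X := blk22 (1 + B * S⁻¹) (-(B * S⁻¹)) (-S⁻¹) S⁻¹ with hX
  have hMX : M * X = 1 := by
    rw [hM, hX, hP4, blk22_eq, blk22_eq, Matrix.submatrix_mul_equiv,
      fromBlocks_multiply]
    have h11 : 1 * (1 + B * S⁻¹) + B * (-S⁻¹) = 1 := by
      rw [one_mul, Matrix.mul_neg]; abel
    have h12 : 1 * (-(B * S⁻¹)) + B * S⁻¹ = 0 := by rw [one_mul]; abel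
    have h21 : 1 * (1 + B * S⁻¹) + (B + S) * (-S⁻¹) = 0 := by
      rw [one_mul, Matrix.mul_neg, Matrix.add_mul, hSS]; abel
    have h22 : 1 * (-(B * S⁻¹)) + (B + S) * S⁻¹ = 1 := by
      rw [one_mul, Matrix.add_mul, hSS]; abel
    rw [h11, h12, h21, h22, fromBlocks_one, Matrix.submatrix_one_equiv]
  have hXM : X * M = 1 := (mul_eq_one_comm).mp hMX
  have hMu : IsUnit M := ⟨⟨M, X, hMX, hXM⟩, rfl⟩
  refine ⟨hMu, ?_⟩
  have hMdet : IsUnit M.det := by rwa [← Matrix.isUnit_iff_isUnit_det]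
  have hinner :
      fromBlocks (1 : Matrix (Fin N) (Fin N) ℂ) B 1 (P1 * P4) *
          fromBlocks (1 : Matrix (Fin N) (Fin N) ℂ) (fromCols P1 (0 : Matrix (Fin N) (Fin N) ℂ))
            (0 : Matrix (Fin N) (Fin N) ℂ)
            (fromCols (0 : Matrix (Fin N) (Fin N) ℂ) (1 : Matrix (Fin N) (Fin N) ℂ)) =
        fromBlocks (1 : Matrix (Fin N) (Fin N) ℂ) (fromCols P1 B)
          (1 : Matrix (Fin N) (Fin N) ℂ) (fromCols P1 (P1 * P4)) := by
    rw [fromBlocks_multiply]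
    simp [Matrix.mul_fromCols, fromColumns_add']
  have hG : M * blk23 1 P1 0 0 0 1 = blk23 1 P1 B 1 P1 (P1 * P4) := by
    rw [hM, blk22_eq, blk23_eq, blk23_eq, Matrix.submatrix_mul_equiv, hinner]
  rw [Gmat, ← hB, ← hG, ← Matrix.mul_assoc, ← Matrix.mul_assoc,
    Matrix.nonsing_inv_mul M hMdet, Matrix.one_mul]
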